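/- arXiv:2111.12045 — 8 statements merged into one kernel-verified Lean document; each statement's English description precedes it below -/
import Mathlib

section
/- Let H > 0 be a real number, T a positive integer, and (u_t)_{t≥1} a sequence of real numbers with 0 ≤ u_t ≤ H for all t. Define U_0 = 0 and U_t = ∑_{ℓ=1}^t u_ℓ, and let Ω = {t ∈ {0,...,T} : U_t < u_{t+1} − 1}. Then ∑_{t ∈ Ω} √(u_{t+1} / max(U_t, 1)) ≤ 2H. -/
open scoped Classical

private lemma sqrt_le_self' {x : ℝ} (hx : 1 ≤ x) : Real.sqrt x ≤ x := by
  nlinarith [Real.sq_sqrt (by linarith : (0:ℝ) ≤ x), Real.sqrt_nonneg x,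
    sq_nonneg (Real.sqrt x - 1)]

/-- Part (i) of the technical pigeonhole lemma: the sum over the "large jump"
indices `Ω = {t ∈ {0,…,T} : U t < u (t+1) - 1}` of `√(u_{t+1} / max(U_t, 1))`
is bounded by `2H`. -/
theorem pigeonhole_sqrt_part (H : ℝ) (hH : 0 < H) (T : ℕ) (hT : 0 < T)
    (u U : ℕ → ℝ)
    (hu : ∀ t, 1 ≤ t → 0 ≤ u t ∧ u t ≤ H)
    (hU : ∀ t, U t = ∑ ℓ ∈ Finset.Icc 1 t, u ℓ) :
    ∑ t ∈ (Finset.range (T + 1)).filter (fun t => U t < u (t + 1) - 1),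
        Real.sqrt (u (t + 1) / max (U t) 1) ≤ 2 * H := by
  set f : ℕ → ℝ := fun t => Real.sqrt (u (t + 1) / max (U t) 1) with hf
  set S := (Finset.range (T + 1)).filter (fun t => U t < u (t + 1) - 1) with hSdef
  have hu0 : ∀ t : ℕ, 0 ≤ u (t + 1) := fun t => (hu (t + 1) (by omega)).1
  have huH : ∀ t : ℕ, u (t + 1) ≤ H := fun t => (hu (t + 1) (by omega)).2
  have hU0 : ∀ t, 0 ≤ U t := by
    intro t; rw [hU]
    exact Finset.sum_nonneg fun ℓ hℓ => (hu ℓ (Finset.mem_Icc.mp hℓ).1).1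
  have hUsucc : ∀ t, U (t + 1) = U t + u (t + 1) := by
    intro t; rw [hU, hU, Finset.sum_Icc_succ_top (by omega : 1 ≤ t + 1)]
  have hmono : ∀ s t : ℕ, s ≤ t → U s ≤ U t := by
    intro s t hst; rw [hU, hU]
    apply Finset.sum_le_sum_of_subset_of_nonneg (Finset.Icc_subset_Icc_right hst)
    intro i hi _; exact (hu i (Finset.mem_Icc.mp hi).1).1
  by_cases hSe : S = ∅
  · rw [hSe, Finset.sum_empty]; positivity
  have hSne : S.Nonempty := Finset.nonempty_iff_ne_empty.mpr hSe
  set a := S.min' hSne with ha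
  set b := S.max' hSne with hb
  have haS : a ∈ S := S.min'_mem hSne
  have hbS : b ∈ S := S.max'_mem hSne
  have haΩ : U a < u (a + 1) - 1 := (Finset.mem_filter.mp haS).2
  have hbΩ : U b < u (b + 1) - 1 := (Finset.mem_filter.mp hbS).2
  have hab : a ≤ b := S.min'_le b hbS
  have hu1 : 1 < u (a + 1) := by have := hU0 a; linarith
  -- telescoping sum
  have htel : ∀ n, a ≤ n →
      ∑ t ∈ Finset.Icc (a + 1) n, (U (t + 1) - U t) = U (n + 1) - U (a + 1) := by
    intro n hn
    induction n, hn using Nat.le_induction with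
    | base =>
      rw [Finset.Icc_eq_empty (by omega), Finset.sum_empty]; ring
    | succ n hn ih =>
      rw [Finset.sum_Icc_succ_top (by omega : a + 1 ≤ n + 1), ih]; ring
  -- bound the sum over S.erase a
  have herase : ∑ t ∈ S.erase a, f t ≤ U (b + 1) - U (a + 1) := by
    have hstep : ∀ t ∈ S.erase a, f t ≤ U (t + 1) - U t := by
      intro t ht
      obtain ⟨hta, htS⟩ := Finset.mem_erase.mp ht
      have ht1 : a + 1 ≤ t := by
        have := S.min'_le t htS; omega
      have hUt1 : 1 < U t := by
        have h1 := hUsucc a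
        have h2 := hmono (a + 1) t ht1
        have h3 := hU0 a
        linarith
      have htΩ : U t < u (t + 1) - 1 := (Finset.mem_filter.mp htS).2
      have hmax : max (U t) 1 = U t := max_eq_left hUt1.le
      have hr1 : 1 ≤ u (t + 1) / U t := by
        rw [le_div_iff₀ (by linarith)]; linarith
      calc f t = Real.sqrt (u (t + 1) / U t) := by rw [hf]; simp [hmax]
        _ ≤ u (t + 1) / U t := sqrt_le_self' hr1
        _ ≤ u (t + 1) := div_le_self (hu0 t) hUt1.le
        _ = U (t + 1) - U t := by rw [hUsucc t]; ring
    calc ∑ t ∈ S.erase a, f t ≤ ∑ t ∈ S.erase a, (U (t + 1) - U t) :=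
          Finset.sum_le_sum hstep
      _ ≤ ∑ t ∈ Finset.Icc (a + 1) b, (U (t + 1) - U t) := by
          apply Finset.sum_le_sum_of_subset_of_nonneg
          · intro t ht
            obtain ⟨hta, htS⟩ := Finset.mem_erase.mp ht
            have h1 := S.min'_le t htS
            have h2 := S.le_max' t htS
            exact Finset.mem_Icc.mpr ⟨by omega, h2⟩
          · intro t _ _
            have := hUsucc t; have := hu0 t; linarith
      _ = U (b + 1) - U (a + 1) := htel b hab
  -- bound the first term
  have hfa : f a ≤ u (a + 1) := by
    have h1 : u (a + 1) / max (U a) 1 ≤ u (a + 1) :=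
      div_le_self (hu0 a) (le_max_right _ 1)
    calc f a ≤ Real.sqrt (u (a + 1)) := Real.sqrt_le_sqrt h1
      _ ≤ u (a + 1) := sqrt_le_self' hu1.le
  have hsplit : f a + ∑ t ∈ S.erase a, f t = ∑ t ∈ S, f t :=
    Finset.add_sum_erase S f haS
  have hUa1 : u (a + 1) ≤ U (a + 1) := by
    have := hUsucc a; have := hU0 a; linarith
  have hUb1 : U (b + 1) ≤ 2 * H - 1 := by
    have := hUsucc b; have := huH b; linarith
  calc ∑ t ∈ S, f t = f a + ∑ t ∈ S.erase a, f t := hsplit.symm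
    _ ≤ u (a + 1) + (U (b + 1) - U (a + 1)) := add_le_add hfa herase
    _ ≤ 2 * H := by linarith
end

section
/- Let H > 0 be a real number, T a positive integer, and (u_t)_{t≥1} a sequence of real numbers with 0 ≤ u_t ≤ H for all t. Define U_0 = 0 and U_t = ∑_{ℓ=1}^t u_ℓ, and let Ω = {t ∈ {0,...,T} : U_t < u_{t+1} − 1}. Then ∑_{t ∈ {0,...,T} \ Ω} u_{t+1} / max(U_t, 1) ≤ 4·log(U_{T+1} + 1), where log denotes the natural logarithm. -/
open scoped Classical

lemma pigeonhole_key (a b : ℝ) (ha : 0 ≤ a) (hb : 0 ≤ b) (hba : b ≤ a + 1) :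
    b / max a 1 ≤ 4 * (Real.log (a + b + 1) - Real.log (a + 1)) := by
  have h1 : (0:ℝ) < a + 1 := by linarith
  have h2 : (0:ℝ) < a + b + 1 := by linarith
  have hlog : Real.log (a + 1) - Real.log (a + b + 1) ≤ (a + 1) / (a + b + 1) - 1 := by
    have := Real.log_le_sub_one_of_pos (div_pos h1 h2)
    rwa [Real.log_div (ne_of_gt h1) (ne_of_gt h2)] at this
  have hlog' : b / (a + b + 1) ≤ Real.log (a + b + 1) - Real.log (a + 1) := by
    have : 1 - (a + 1) / (a + b + 1) = b / (a + b + 1) := by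
      field_simp
      ring
    linarith [hlog, this.symm.le, this.le]
  have hmax : (0:ℝ) < max a 1 := lt_of_lt_of_le one_pos (le_max_right a 1)
  have hstep : b / max a 1 ≤ 4 * (b / (a + b + 1)) := by
    rw [div_le_iff₀ hmax]
    rw [mul_comm (4:ℝ), mul_assoc, div_mul_eq_mul_div, le_div_iff₀ h2] at *
    rcases le_total a 1 with h | h
    · have : max a 1 = 1 := max_eq_right h
      rw [this]; nlinarith
    · have : max a 1 = a := max_eq_left h
      rw [this]; nlinarith
  linarith [mul_le_mul_of_nonneg_left hlog' (by norm_num : (0:ℝ) ≤ 4)]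

/-- Part (ii) of the technical pigeonhole lemma: the sum over the indices in
`{0,…,T}` outside `Ω = {t : U t < u (t+1) - 1}` of `u_{t+1} / max(U_t, 1)`
is bounded by `4 log(U_{T+1} + 1)`. -/
theorem pigeonhole_log_part (H : ℝ) (hH : 0 < H) (T : ℕ) (hT : 0 < T)
    (u U : ℕ → ℝ)
    (hu : ∀ t, 1 ≤ t → 0 ≤ u t ∧ u t ≤ H)
    (hU : ∀ t, U t = ∑ ℓ ∈ Finset.Icc 1 t, u ℓ) :
    ∑ t ∈ (Finset.range (T + 1)).filter (fun t => ¬ (U t < u (t + 1) - 1)),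
        u (t + 1) / max (U t) 1 ≤ 4 * Real.log (U (T + 1) + 1) := by
  have hUnn : ∀ t, 0 ≤ U t := by
    intro t
    rw [hU t]
    exact Finset.sum_nonneg fun ℓ hℓ => (hu ℓ (Finset.mem_Icc.mp hℓ).1).1
  have hUsucc : ∀ t, U (t + 1) = U t + u (t + 1) := by
    intro t
    rw [hU, hU, Finset.sum_Icc_succ_top (by omega : 1 ≤ t + 1)]
  have hun : ∀ t, 0 ≤ u (t + 1) := fun t => (hu (t + 1) (Nat.le_add_left 1 t)).1
  set g : ℕ → ℝ := fun t => 4 * Real.log (U t + 1) with hg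
  have step1 : ∑ t ∈ (Finset.range (T + 1)).filter (fun t => ¬ (U t < u (t + 1) - 1)),
      u (t + 1) / max (U t) 1 ≤ ∑ t ∈ (Finset.range (T + 1)).filter
        (fun t => ¬ (U t < u (t + 1) - 1)), (g (t + 1) - g t) := by
    apply Finset.sum_le_sum
    intro t ht
    have hmem := Finset.mem_filter.mp ht
    have hba : u (t + 1) ≤ U t + 1 := by linarith [not_lt.mp hmem.2]
    have := pigeonhole_key (U t) (u (t + 1)) (hUnn t) (hun t) hba
    simp only [hg]
    rw [hUsucc t]
    calc u (t + 1) / max (U t) 1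
        ≤ 4 * (Real.log (U t + u (t + 1) + 1) - Real.log (U t + 1)) := by
          exact this
      _ = 4 * Real.log (U t + u (t + 1) + 1) - 4 * Real.log (U t + 1) := by ring
  have step2 : ∑ t ∈ (Finset.range (T + 1)).filter (fun t => ¬ (U t < u (t + 1) - 1)),
      (g (t + 1) - g t) ≤ ∑ t ∈ Finset.range (T + 1), (g (t + 1) - g t) := by
    apply Finset.sum_le_sum_of_subset_of_nonneg (Finset.filter_subset _ _)
    intro t _ _
    have h1 : U t + 1 ≤ U (t + 1) + 1 := by
      rw [hUsucc t]; linarith [hun t]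
    have := Real.log_le_log (by linarith [hUnn t]) h1
    simp only [hg]
    linarith
  have step3 : ∑ t ∈ Finset.range (T + 1), (g (t + 1) - g t) = g (T + 1) - g 0 :=
    Finset.sum_range_sub g (T + 1)
  have hU0 : U 0 = 0 := by rw [hU]; simp
  have hg0 : g 0 = 0 := by simp [hg, hU0]
  calc _ ≤ _ := step1
    _ ≤ _ := step2
    _ = g (T + 1) - g 0 := step3
    _ = 4 * Real.log (U (T + 1) + 1) := by rw [hg0]; simp [hg]
end

section
/- Let H > 0 be a real number, T a positive integer, and (u_t)_{t≥1} a sequence of real numbers with 0 ≤ u_t ≤ H for all t. Define U_0 = 0 and U_t = ∑_{ℓ=1}^t u_ℓ. Then ∑_{t=0}^{T} min( u_{t+1} / max(U_t, 1), 1 ) ≤ 4·log(U_{T+1} + 1), where log denotes the natural logarithm. -/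
lemma aux_min_log (x : ℝ) (hx : 0 ≤ x) : min (2 * x) 1 ≤ 4 * Real.log (1 + x) := by
  have h1x : (0:ℝ) < 1 + x := by linarith
  have hlog : x / (1 + x) ≤ Real.log (1 + x) := by
    have h := Real.log_le_sub_one_of_pos (show (0:ℝ) < (1+x)⁻¹ by positivity)
    rw [Real.log_inv] at h
    have : 1 - (1 + x)⁻¹ ≤ Real.log (1 + x) := by linarith
    calc x / (1 + x) = 1 - (1+x)⁻¹ := by field_simp; ring
    _ ≤ Real.log (1 + x) := this
  have hmin : min (2 * x) 1 ≤ 4 * (x / (1 + x)) := by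
    have h4 : 4 * (x / (1 + x)) = 4 * x / (1 + x) := by ring
    rcases le_total (2 * x) 1 with h | h
    · rw [min_eq_left h, h4, le_div_iff₀ h1x]
      nlinarith
    · rw [min_eq_right h, h4, le_div_iff₀ h1x]
      nlinarith
  linarith

/-- Part (iii) of the technical pigeonhole lemma: the sum over `t ∈ {0,…,T}` of
`min(u_{t+1} / max(U_t, 1), 1)` is bounded by `4 log(U_{T+1} + 1)`. -/
theorem pigeonhole_min_part (H : ℝ) (hH : 0 < H) (T : ℕ) (hT : 0 < T)
    (u U : ℕ → ℝ)
    (hu : ∀ t, 1 ≤ t → 0 ≤ u t ∧ u t ≤ H)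
    (hU : ∀ t, U t = ∑ ℓ ∈ Finset.Icc 1 t, u ℓ) :
    ∑ t ∈ Finset.range (T + 1),
        min (u (t + 1) / max (U t) 1) 1 ≤ 4 * Real.log (U (T + 1) + 1) := by
  have hU0 : U 0 = 0 := by rw [hU]; simp
  have hUnn : ∀ t, 0 ≤ U t := by
    intro t
    rw [hU]
    exact Finset.sum_nonneg fun ℓ hℓ => (hu ℓ (Finset.mem_Icc.mp hℓ).1).1
  have hstep : ∀ t : ℕ, U (t + 1) = U t + u (t + 1) := by
    intro t
    rw [hU, hU, Finset.sum_Icc_succ_top (by omega : 1 ≤ t + 1)]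
  have key : ∀ t : ℕ, min (u (t + 1) / max (U t) 1) 1
      ≤ 4 * (Real.log (U (t + 1) + 1) - Real.log (U t + 1)) := by
    intro t
    set a := U t with ha'
    set b := u (t + 1) with hb'
    have ha : 0 ≤ a := hUnn t
    have hb : 0 ≤ b := (hu (t + 1) (by omega)).1
    have hapos : (0:ℝ) < a + 1 := by linarith
    have hmpos : (0:ℝ) < max a 1 := lt_max_of_lt_right one_pos
    have hm : (a + 1) / 2 ≤ max a 1 := by
      rcases max_cases a 1 with ⟨h1, h2⟩ | ⟨h1, h2⟩ <;> rw [h1] <;> linarith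
    have h1 : b / max a 1 ≤ 2 * (b / (a + 1)) := by
      have := div_le_div_of_nonneg_left hb (by positivity : (0:ℝ) < (a+1)/2) hm
      calc b / max a 1 ≤ b / ((a + 1) / 2) := this
      _ = 2 * (b / (a + 1)) := by field_simp
    have h2 : min (u (t+1) / max (U t) 1) 1 ≤ min (2 * (b / (a + 1))) 1 :=
      min_le_min h1 le_rfl
    have h3 := aux_min_log (b / (a + 1)) (by positivity)
    have h4 : Real.log (1 + b / (a + 1)) = Real.log (U (t+1) + 1) - Real.log (a + 1) := by
      have : 1 + b / (a + 1) = (a + b + 1) / (a + 1) := by field_simp; ring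
      rw [this, Real.log_div (by positivity) (by positivity), hstep t]
    rw [h4] at h3
    calc min (u (t+1) / max (U t) 1) 1 ≤ min (2 * (b / (a + 1))) 1 := h2
    _ ≤ 4 * (Real.log (U (t+1) + 1) - Real.log (a + 1)) := h3
  calc ∑ t ∈ Finset.range (T + 1), min (u (t + 1) / max (U t) 1) 1
      ≤ ∑ t ∈ Finset.range (T + 1),
          4 * (Real.log (U (t + 1) + 1) - Real.log (U t + 1)) :=
        Finset.sum_le_sum fun t _ => key t
    _ = 4 * (Real.log (U (T + 1) + 1) - Real.log (U 0 + 1)) := by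
        rw [← Finset.mul_sum, Finset.sum_range_sub (fun t => Real.log (U t + 1))]
    _ = 4 * Real.log (U (T + 1) + 1) := by rw [hU0]; simp
end

section
/- There exists an absolute constant κ > 0 such that for all real numbers B ≥ 1, C ≥ 1, α ≥ e, and X ≥ 2: if X ≤ B·√X·log(αX) + C·log²(αX), then X ≤ κ·( B²·log²(αB) + C·log²(αC) ). -/
set_option maxHeartbeats 1000000


/-- The auxiliary functional-inequality inversion lemma: there is an absolute
constant `κ > 0` such that for all `B, C ≥ 1`, `α ≥ e`, `X ≥ 2`, if
`X ≤ B √X log(αX) + C log²(αX)` then `X ≤ κ (B² log²(αB) + C log²(αC))`. -/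
theorem aux_inequality_inversion :
    ∃ κ : ℝ, 0 < κ ∧
      ∀ B C α X : ℝ, 1 ≤ B → 1 ≤ C → Real.exp 1 ≤ α → 2 ≤ X →
        X ≤ B * Real.sqrt X * Real.log (α * X) + C * (Real.log (α * X)) ^ 2 →
        X ≤ κ * (B ^ 2 * (Real.log (α * B)) ^ 2 + C * (Real.log (α * C)) ^ 2) := by
  refine ⟨663552, by norm_num, ?_⟩
  intro B C α X hB hC hα hX h
  have he : (2:ℝ) ≤ Real.exp 1 := by
    have := Real.add_one_le_exp (1:ℝ); linarith
  have hα2 : (2:ℝ) ≤ α := le_trans he hα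
  have hα0 : (0:ℝ) < α := by linarith
  have hB0 : (0:ℝ) < B := by linarith
  have hC0 : (0:ℝ) < C := by linarith
  have hX0 : (0:ℝ) < X := by linarith
  have hlogα : 1 ≤ Real.log α := by
    rw [Real.le_log_iff_exp_le hα0]; exact hα
  have hlogB : 0 ≤ Real.log B := Real.log_nonneg hB
  have hlogC : 0 ≤ Real.log C := Real.log_nonneg hC
  have hlogX : 0 ≤ Real.log X := Real.log_nonneg (by linarith)
  set L := Real.log (α * X) with hLdef
  set P := Real.log (α * B) with hPdef
  set Q := Real.log (α * C) with hQdef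
  have hLsplit : L = Real.log α + Real.log X := Real.log_mul (ne_of_gt hα0) (ne_of_gt hX0)
  have hPsplit : P = Real.log α + Real.log B := Real.log_mul (ne_of_gt hα0) (ne_of_gt hB0)
  have hQsplit : Q = Real.log α + Real.log C := Real.log_mul (ne_of_gt hα0) (ne_of_gt hC0)
  have hL1 : 1 ≤ L := by rw [hLsplit]; linarith
  have hP1 : 1 ≤ P := by rw [hPsplit]; linarith
  have hQ1 : 1 ≤ Q := by rw [hQsplit]; linarith
  -- Step A : X ≤ (B²+2C) L²
  have hsq : Real.sqrt X ^ 2 = X := Real.sq_sqrt hX0.le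
  have hamgm : B * Real.sqrt X * L ≤ X / 2 + B ^ 2 * L ^ 2 / 2 := by
    nlinarith [sq_nonneg (Real.sqrt X - B * L)]
  have hA : X ≤ (B ^ 2 + 2 * C) * L ^ 2 := by nlinarith
  set D : ℝ := B ^ 2 + 2 * C with hDdef
  have hD1 : 1 ≤ D := by nlinarith
  have hD0 : 0 < D := by linarith
  set M := Real.log (α * D) with hMdef
  have hMsplit : M = Real.log α + Real.log D := Real.log_mul (ne_of_gt hα0) (ne_of_gt hD0)
  have hlogD : 0 ≤ Real.log D := Real.log_nonneg hD1
  have hM1 : 1 ≤ M := by rw [hMsplit]; linarith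
  -- Step B : L ≤ 64 M
  have hL0 : 0 < L := by linarith
  have hlogL : Real.log L ≤ 2 * Real.sqrt L - 2 := by
    have h1 : Real.log (Real.sqrt L) ≤ Real.sqrt L - 1 :=
      Real.log_le_sub_one_of_pos (Real.sqrt_pos.mpr hL0)
    have h2 : Real.log (Real.sqrt L) = Real.log L / 2 := Real.log_sqrt hL0.le
    linarith
  have hLM : L ≤ M + 4 * Real.sqrt L := by
    have hmono : L ≤ Real.log (α * (D * L ^ 2)) := by
      apply Real.log_le_log (by positivity)
      exact mul_le_mul_of_nonneg_left hA hα0.le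
    have hexpand : Real.log (α * (D * L ^ 2)) = M + 2 * Real.log L := by
      rw [show α * (D * L ^ 2) = (α * D) * L ^ 2 by ring,
        Real.log_mul (by positivity) (by positivity), Real.log_pow]
      push_cast; ring
    rw [hexpand] at hmono
    linarith
  have hLfin : L ≤ 64 * M := by
    rcases le_or_gt L 64 with hc | hc
    · linarith
    · have hsqL : Real.sqrt L * Real.sqrt L = L := Real.mul_self_sqrt hL0.le
      have h8 : (8:ℝ) ≤ Real.sqrt L := by
        have h64 : Real.sqrt 64 ≤ Real.sqrt L := Real.sqrt_le_sqrt hc.le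
        rwa [show (64:ℝ) = 8 ^ 2 by norm_num, Real.sqrt_sq (by norm_num : (0:ℝ) ≤ 8)] at h64
      have h9 : 8 * Real.sqrt L ≤ Real.sqrt L * Real.sqrt L :=
        mul_le_mul_of_nonneg_right h8 (Real.sqrt_nonneg L)
      rw [hsqL] at h9
      linarith
  -- Step C : M ≤ 3 (P + Q)
  have hM3 : M ≤ 3 * (P + Q) := by
    have hDle : D ≤ 3 * B ^ 2 * C := by
      have h1 : 0 ≤ B ^ 2 * (C - 1) := mul_nonneg (sq_nonneg B) (by linarith)
      have h2 : 0 ≤ C * (B ^ 2 - 1) := mul_nonneg hC0.le (by nlinarith)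
      rw [hDdef]; nlinarith
    have hmono : M ≤ Real.log (α * (3 * B ^ 2 * C)) :=
      Real.log_le_log (by positivity) (by nlinarith)
    have hexpand : Real.log (α * (3 * B ^ 2 * C)) =
        Real.log α + Real.log 3 + 2 * Real.log B + Real.log C := by
      rw [show α * (3 * B ^ 2 * C) = α * 3 * B ^ 2 * C by ring,
        Real.log_mul (by positivity) (ne_of_gt hC0),
        Real.log_mul (by positivity) (by positivity),
        Real.log_mul (ne_of_gt hα0) (by norm_num), Real.log_pow]
      push_cast; ring
    have hlog3 : Real.log 3 ≤ 2 := by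
      have := Real.log_le_sub_one_of_pos (show (0:ℝ) < 3 by norm_num); linarith
    rw [hexpand] at hmono
    rw [hPsplit, hQsplit]
    linarith
  -- Combine : L² ≤ 73728 (P² + Q²)
  have hL192 : L ≤ 192 * (P + Q) := by linarith
  have hL2 : L ^ 2 ≤ 73728 * (P ^ 2 + Q ^ 2) := by
    nlinarith [sq_nonneg (P - Q), sq_nonneg (P + Q)]
  have hstep : X ≤ D * (73728 * (P ^ 2 + Q ^ 2)) :=
    le_trans hA (mul_le_mul_of_nonneg_left hL2 hD0.le)
  -- Cross terms
  have hcross1 : B ^ 2 * Q ^ 2 ≤ 4 * (B ^ 2 * P ^ 2 + C * Q ^ 2) := by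
    rcases le_total C (B ^ 2) with hc | hc
    · have hQ2P : Q ≤ 2 * P := by
        have : Real.log C ≤ Real.log (B ^ 2) := Real.log_le_log hC0 hc
        rw [Real.log_pow] at this
        push_cast at this
        rw [hPsplit, hQsplit]; linarith
      have hQ2 : Q ^ 2 ≤ 4 * P ^ 2 := by nlinarith
      have := mul_le_mul_of_nonneg_left hQ2 (sq_nonneg B)
      have hCQ : 0 ≤ C * Q ^ 2 := mul_nonneg hC0.le (sq_nonneg Q)
      linarith
    · have := mul_le_mul_of_nonneg_right hc (sq_nonneg Q)
      have hBP : 0 ≤ B ^ 2 * P ^ 2 := mul_nonneg (sq_nonneg B) (sq_nonneg P)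
      have hCQ : 0 ≤ C * Q ^ 2 := mul_nonneg hC0.le (sq_nonneg Q)
      linarith
  have hcross2 : C * P ^ 2 ≤ B ^ 2 * P ^ 2 + C * Q ^ 2 := by
    rcases le_total B C with hbc | hbc
    · have hPQ : P ≤ Q := by
        have : Real.log B ≤ Real.log C := Real.log_le_log hB0 hbc
        rw [hPsplit, hQsplit]; linarith
      have hP2 : P ^ 2 ≤ Q ^ 2 := by nlinarith
      have := mul_le_mul_of_nonneg_left hP2 hC0.le
      have hBP : 0 ≤ B ^ 2 * P ^ 2 := mul_nonneg (sq_nonneg B) (sq_nonneg P)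
      linarith
    · have hc2 : C ≤ B ^ 2 := by nlinarith
      have := mul_le_mul_of_nonneg_right hc2 (sq_nonneg P)
      have hCQ : 0 ≤ C * Q ^ 2 := mul_nonneg hC0.le (sq_nonneg Q)
      linarith
  -- Final
  have hfinal : D * (73728 * (P ^ 2 + Q ^ 2)) ≤
      663552 * (B ^ 2 * P ^ 2 + C * Q ^ 2) := by
    have h2 : D * (P ^ 2 + Q ^ 2) ≤ 9 * (B ^ 2 * P ^ 2 + C * Q ^ 2) := by
      have h1 : D * (P ^ 2 + Q ^ 2) =
          B ^ 2 * P ^ 2 + B ^ 2 * Q ^ 2 + 2 * (C * P ^ 2) + 2 * (C * Q ^ 2) := by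
        rw [hDdef]; ring
      have hBP : 0 ≤ B ^ 2 * P ^ 2 := mul_nonneg (sq_nonneg B) (sq_nonneg P)
      have hCQ : 0 ≤ C * Q ^ 2 := mul_nonneg hC0.le (sq_nonneg Q)
      rw [h1]; linarith
    calc D * (73728 * (P ^ 2 + Q ^ 2)) = 73728 * (D * (P ^ 2 + Q ^ 2)) := by ring
      _ ≤ 73728 * (9 * (B ^ 2 * P ^ 2 + C * Q ^ 2)) := by linarith
      _ = 663552 * (B ^ 2 * P ^ 2 + C * Q ^ 2) := by ring
  linarith
end

section
/- For all real numbers B ≥ 1, α ≥ e, and X ≥ 2: if X ≤ B·√X·log(αX), then X ≤ (64·B²/9)·log²(4·e·B·√α). -/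
/-- Square-root branch of the auxiliary inequality lemma: for `B ≥ 1`, `α ≥ e`,
`X ≥ 2`, if `X ≤ B √X log(αX)` then `X ≤ (64 B²/9) log²(4 e B √α)`. -/
theorem aux_inequality_sqrt_branch (B α X : ℝ) (hB : 1 ≤ B)
    (hα : Real.exp 1 ≤ α) (hX : 2 ≤ X)
    (h : X ≤ B * Real.sqrt X * Real.log (α * X)) :
    X ≤ (64 * B ^ 2 / 9) * (Real.log (4 * Real.exp 1 * B * Real.sqrt α)) ^ 2 := by
  set e := Real.exp 1 with he
  have he1 : (2.7182818283 : ℝ) < e := Real.exp_one_gt_d9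
  have he2 : e < 2.7182818286 := Real.exp_one_lt_d9
  have hBpos : (0:ℝ) < B := by linarith
  have hXpos : (0:ℝ) < X := by linarith
  have hαpos : (0:ℝ) < α := by linarith
  set Y := Real.sqrt X with hYdef
  have hY2 : Y ^ 2 = X := Real.sq_sqrt hXpos.le
  have hYpos : 0 < Y := Real.sqrt_pos.mpr hXpos
  -- Y ≤ B * log(α X)
  have h1 : Y ≤ B * Real.log (α * X) := by
    have : Y * Y ≤ (B * Real.log (α * X)) * Y := by
      nlinarith [h]
    exact le_of_mul_le_mul_right this hYpos
  -- log(α X) = log α + 2 log Y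
  have hlog : Real.log (α * X) = Real.log α + 2 * Real.log Y := by
    rw [← hY2, Real.log_mul hαpos.ne' (by positivity), Real.log_pow]
    ring
  -- log Y ≤ Y/(4 B e) + log (4 B)
  have hden : (0:ℝ) < 4 * B * e := by positivity
  have hlogY : Real.log Y ≤ Y / (4 * B * e) + Real.log (4 * B) := by
    have h2 : Real.log (Y / (4 * B * e)) ≤ Y / (4 * B * e) - 1 :=
      Real.log_le_sub_one_of_pos (by positivity)
    have h3 : Real.log Y = Real.log (Y / (4 * B * e)) + Real.log (4 * B) + 1 := by
      rw [Real.log_div hYpos.ne' hden.ne', Real.log_mul (by positivity) (Real.exp_pos 1).ne',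
        Real.log_exp]
      ring
    linarith
  have hla : (1:ℝ) ≤ Real.log α := by
    calc (1:ℝ) = Real.log e := (Real.log_exp 1).symm
    _ ≤ Real.log α := Real.log_le_log (Real.exp_pos 1) hα
  have hlb : (0:ℝ) ≤ Real.log (4 * B) := Real.log_nonneg (by linarith)
  -- the target log
  have hL : Real.log (4 * e * B * Real.sqrt α) =
      Real.log (4 * B) + 1 + (1/2) * Real.log α := by
    rw [show 4 * e * B * Real.sqrt α = (4 * B) * e * Real.sqrt α by ring,
      Real.log_mul (by positivity) (Real.sqrt_pos.mpr hαpos).ne',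
      Real.log_mul (by positivity) (Real.exp_pos 1).ne', Real.log_exp,
      Real.log_sqrt hαpos.le]
    ring
  set a := Real.log α
  set b := Real.log (4 * B)
  -- From h1: Y ≤ B a + 2 B (Y/(4Be) + b) = B a + 2 B b + Y/(2e)
  have h4 : Y ≤ B * a + 2 * B * b + Y / (2 * e) := by
    have : 2 * B * Real.log Y ≤ 2 * B * (Y / (4 * B * e) + b) := by
      apply mul_le_mul_of_nonneg_left hlogY (by positivity)
    have heq : 2 * B * (Y / (4 * B * e) + b) = Y / (2 * e) + 2 * B * b := by
      field_simp
      ring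
    rw [hlog] at h1
    linarith [h1, this, heq ▸ this]
  -- hence Y (1 - 1/(2e)) ≤ B a + 2 B b, so Y ≤ (2e/(2e-1))(B a + 2 B b)
  have h5 : Y * (2 * e - 1) ≤ 2 * e * (B * a + 2 * B * b) := by
    have he0 : (0:ℝ) < 2 * e := by linarith
    have : Y - Y / (2 * e) ≤ B * a + 2 * B * b := by linarith
    have h6 : Y - Y / (2 * e) = Y * (2 * e - 1) / (2 * e) := by
      field_simp
    rw [h6] at this
    calc Y * (2 * e - 1) = (Y * (2 * e - 1) / (2 * e)) * (2 * e) := by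
          field_simp
      _ ≤ (B * a + 2 * B * b) * (2 * e) := by
          apply mul_le_mul_of_nonneg_right this he0.le
      _ = 2 * e * (B * a + 2 * B * b) := by ring
  -- Y ≤ (8B/3)(b + 1 + a/2)
  have hkey : Y ≤ (8 * B / 3) * (b + 1 + a / 2) := by
    have h2e1 : (0:ℝ) < 2 * e - 1 := by linarith
    nlinarith [mul_pos hBpos (by linarith : (0:ℝ) < a), mul_nonneg hBpos.le hlb,
      mul_nonneg (mul_nonneg hBpos.le hlb) (by linarith : (0:ℝ) ≤ e - 2),
      mul_nonneg (mul_nonneg hBpos.le (by linarith : (0:ℝ) ≤ a)) (by linarith : (0:ℝ) ≤ e - 2)]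
  rw [hL, ← hY2]
  have hR : (0:ℝ) ≤ (8 * B / 3) * (b + 1 + a / 2) := by positivity
  nlinarith [sq_nonneg ((8 * B / 3) * (b + 1 + a / 2) - Y), hkey, hR, hYpos]
end

section
/- Let S be a finite nonempty set, H ≥ 1 an integer, g ∈ S, and for each h ∈ {1,...,H−1} let P_h : S × S → ℝ be a transition matrix, i.e., P_h(s,s') ≥ 0 for all s,s' and ∑_{s'∈S} P_h(s,s') = 1 for all s; assume g is absorbing, i.e., P_h(g,g) = 1 for all h. Define the failure probabilities backward by ρ_H(s) = 1 if s ≠ g and ρ_H(g) = 0, and ρ_h(s) = ∑_{s'∈S} P_h(s,s')·ρ_{h+1}(s') for 1 ≤ h ≤ H−1 (so ρ_h(s) is the probability that s_H ≠ g for the time-inhomogeneous Markov chain with transition matrices (P_h) started at s_h = s). Define the values backward by V_H(s) = 1 if s ≠ g, V_H(g) = 0, and V_h(s) = 1[s ≠ g] + ∑_{s'∈S} P_h(s,s')·V_{h+1}(s') for 1 ≤ h ≤ H−1. Then for every s ∈ S, ρ_1(s) ≤ V_1(s)/H. -/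
/-- Markov-inequality step of Lemma 9: in a time-inhomogeneous Markov chain on a
finite state space with absorbing goal state `g`, the probability `ρ 1 s` of not
having reached `g` by step `H`, started from `s` at step `1`, is at most
`V 1 s / H` where `V` is the expected cumulative unit cost (`1` per step at a
non-goal state). -/
theorem failure_prob_le_value_div_horizon
    {S : Type*} [Fintype S] [DecidableEq S] [Nonempty S]
    (H : ℕ) (hH : 1 ≤ H) (g : S) (P : ℕ → S → S → ℝ)
    (hPnn : ∀ h, 1 ≤ h → h < H → ∀ s s' : S, 0 ≤ P h s s')
    (hProw : ∀ h, 1 ≤ h → h < H → ∀ s : S, ∑ s' : S, P h s s' = 1)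
    (habs : ∀ h, 1 ≤ h → h < H → P h g g = 1)
    (ρ V : ℕ → S → ℝ)
    (hρH : ∀ s : S, ρ H s = if s = g then 0 else 1)
    (hρ : ∀ h, 1 ≤ h → h < H → ∀ s : S, ρ h s = ∑ s' : S, P h s s' * ρ (h + 1) s')
    (hVH : ∀ s : S, V H s = if s = g then 0 else 1)
    (hV : ∀ h, 1 ≤ h → h < H → ∀ s : S,
      V h s = (if s = g then 0 else 1) + ∑ s' : S, P h s s' * V (h + 1) s') :
    ∀ s : S, ρ 1 s ≤ V 1 s / H := by
  have key : ∀ d : ℕ, d ≤ H - 1 →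
      (∀ s : S, 0 ≤ ρ (H - d) s) ∧ (∀ s : S, ρ (H - d) s ≤ 1) ∧ ρ (H - d) g = 0 ∧
      (∀ s : S, ((d : ℝ) + 1) * ρ (H - d) s ≤ V (H - d) s) := by
    intro d
    induction d with
    | zero =>
      intro _
      simp only [Nat.sub_zero]
      refine ⟨fun s => ?_, fun s => ?_, ?_, fun s => ?_⟩
      · rw [hρH]; split <;> norm_num
      · rw [hρH]; split <;> norm_num
      · rw [hρH]; simp
      · rw [hρH, hVH]; norm_num
    | succ d ih =>
      intro hd
      have hd' : d ≤ H - 1 := Nat.le_of_succ_le hd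
      obtain ⟨ihnn, ihle, ihg, ihV⟩ := ih hd'
      set h := H - (d + 1) with hh
      have h1 : 1 ≤ h := by omega
      have h2 : h < H := by omega
      have hsucc : h + 1 = H - d := by omega
      have hPnn' := hPnn h h1 h2
      -- P h g s' = 0 for s' ≠ g
      have hPg : ∀ s' : S, s' ≠ g → P h g s' = 0 := by
        intro s' hs'
        have hsum : ∑ t ∈ Finset.univ.erase g, P h g t = 0 := by
          have := hProw h h1 h2 g
          have := Finset.add_sum_erase Finset.univ (P h g) (Finset.mem_univ g)
          rw [hProw h h1 h2 g, habs h h1 h2] at this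
          linarith
        have := (Finset.sum_eq_zero_iff_of_nonneg (fun t _ => hPnn' g t)).mp hsum
        exact this s' (Finset.mem_erase.mpr ⟨hs', Finset.mem_univ s'⟩)
      have hnn : ∀ s : S, 0 ≤ ρ h s := by
        intro s
        rw [hρ h h1 h2, hsucc]
        exact Finset.sum_nonneg fun t _ => mul_nonneg (hPnn' s t) (ihnn t)
      have hle : ∀ s : S, ρ h s ≤ 1 := by
        intro s
        rw [hρ h h1 h2, hsucc]
        calc ∑ t : S, P h s t * ρ (H - d) t ≤ ∑ t : S, P h s t * 1 :=
              Finset.sum_le_sum fun t _ =>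
                mul_le_mul_of_nonneg_left (ihle t) (hPnn' s t)
          _ = 1 := by simpa using hProw h h1 h2 s
      have hg : ρ h g = 0 := by
        rw [hρ h h1 h2, hsucc]
        apply Finset.sum_eq_zero
        intro t _
        by_cases ht : t = g
        · rw [ht, ihg, mul_zero]
        · rw [hPg t ht, zero_mul]
      refine ⟨hnn, hle, hg, fun s => ?_⟩
      have step : ρ h s ≤ (if s = g then (0 : ℝ) else 1) := by
        by_cases hs : s = g
        · simp [hs, hg]
        · simp only [hs, if_false]; exact hle s
      have main : ((d : ℝ) + 1) * ρ h s ≤ ∑ t : S, P h s t * V (h + 1) t := by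
        rw [hρ h h1 h2, Finset.mul_sum]
        apply Finset.sum_le_sum
        intro t _
        rw [← mul_assoc, mul_comm ((d : ℝ) + 1) (P h s t), mul_assoc]
        apply mul_le_mul_of_nonneg_left _ (hPnn' s t)
        rw [hsucc]
        exact ihV t
      have := hV h h1 h2 s
      push_cast
      rw [this]
      have : ((d : ℝ) + 1 + 1) * ρ h s = ρ h s + ((d : ℝ) + 1) * ρ h s := by ring
      rw [this]
      exact add_le_add step main
  intro s
  obtain ⟨_, _, _, hmain⟩ := key (H - 1) le_rfl
  have h1 : H - (H - 1) = 1 := by omega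
  have h2 : ((H : ℝ) - 1) + 1 = H := by ring
  have hcast : ((H - 1 : ℕ) : ℝ) = (H : ℝ) - 1 := by
    push_cast [Nat.cast_sub hH]; ring
  have := hmain s
  rw [h1, hcast, h2] at this
  have hHpos : (0 : ℝ) < H := by positivity
  rw [le_div_iff₀ hHpos]
  linarith [this]
end

section
/- Let S be a finite nonempty set, H ≥ 1 an integer, g ∈ S, and for each h ∈ {1,...,H−1} let P_h : S × S → ℝ be a transition matrix, i.e., P_h(s,s') ≥ 0 for all s,s' and ∑_{s'∈S} P_h(s,s') = 1 for all s; assume g is absorbing, i.e., P_h(g,g) = 1 for all h. Define the failure probabilities backward by ρ_H(s) = 1 if s ≠ g and ρ_H(g) = 0, and ρ_h(s) = ∑_{s'∈S} P_h(s,s')·ρ_{h+1}(s') for 1 ≤ h ≤ H−1. Fix m with 1 ≤ m ≤ H and define φ_m(s) = 1 if s ≠ g, φ_m(g) = 0, and φ_h(s) = ∑_{s'∈S} P_h(s,s')·φ_{h+1}(s') for 1 ≤ h ≤ m−1 (so φ_1(s) is the probability that s_m ≠ g started from s_1 = s). Then for every s ∈ S, ρ_1(s) ≤ φ_1(s) ·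 max_{s'∈S} ρ_m(s'). -/
/-- Block-decomposition step of Lemma 9: the probability `ρ 1 s` of failing to
reach the absorbing goal `g` by step `H` factorizes through the probability
`φ 1 s` of failing to reach `g` by an intermediate step `m`, times the worst-case
failure probability from step `m` onwards. -/
theorem failure_prob_block_decomposition
    {S : Type*} [Fintype S] [DecidableEq S] [Nonempty S]
    (H : ℕ) (hH : 1 ≤ H) (g : S) (P : ℕ → S → S → ℝ)
    (hPnn : ∀ h, 1 ≤ h → h < H → ∀ s s' : S, 0 ≤ P h s s')
    (hProw : ∀ h, 1 ≤ h → h < H → ∀ s : S, ∑ s' : S, P h s s' = 1)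
    (habs : ∀ h, 1 ≤ h → h < H → P h g g = 1)
    (ρ : ℕ → S → ℝ)
    (hρH : ∀ s : S, ρ H s = if s = g then 0 else 1)
    (hρ : ∀ h, 1 ≤ h → h < H → ∀ s : S, ρ h s = ∑ s' : S, P h s s' * ρ (h + 1) s')
    (m : ℕ) (hm1 : 1 ≤ m) (hmH : m ≤ H)
    (φ : ℕ → S → ℝ)
    (hφm : ∀ s : S, φ m s = if s = g then 0 else 1)
    (hφ : ∀ h, 1 ≤ h → h < m → ∀ s : S, φ h s = ∑ s' : S, P h s s' * φ (h + 1) s') :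
    ∀ s : S, ρ 1 s ≤ φ 1 s * (Finset.univ.sup' Finset.univ_nonempty fun s' : S => ρ m s') := by
  -- off-diagonal transitions from g vanish
  have hPg : ∀ h, 1 ≤ h → h < H → ∀ s' : S, s' ≠ g → P h g s' = 0 := by
    intro h h1 hH' s' hs'
    have hsum := hProw h h1 hH' g
    have hsplit : ∑ t : S, P h g t = P h g g + ∑ t ∈ Finset.univ.erase g, P h g t := by
      rw [add_comm, Finset.sum_erase_add _ _ (Finset.mem_univ g)]
    rw [hsplit, habs h h1 hH'] at hsum
    have hzero : ∑ t ∈ Finset.univ.erase g, P h g t = 0 := by linarith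
    have := (Finset.sum_eq_zero_iff_of_nonneg (fun t _ => hPnn h h1 hH' g t)).mp hzero
    exact this s' (Finset.mem_erase.mpr ⟨hs', Finset.mem_univ s'⟩)
  -- g is absorbing: ρ h g = 0 for 1 ≤ h ≤ H
  have hρg : ∀ d h, h + d = H → 1 ≤ h → ρ h g = 0 := by
    intro d
    induction d with
    | zero => intro h hh _; rw [Nat.add_zero] at hh; subst hh; simp [hρH]
    | succ d ih =>
      intro h hh h1
      have hH' : h < H := by omega
      rw [hρ h h1 hH' g]
      have : ∀ s' : S, P h g s' * ρ (h + 1) s' = if s' = g then ρ (h + 1) g else 0 := by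
        intro s'
        by_cases hs' : s' = g
        · subst hs'; simp [habs h h1 hH']
        · simp [hs', hPg h h1 hH' s' hs']
      rw [Finset.sum_congr rfl fun s' _ => this s']
      rw [Finset.sum_ite_eq' Finset.univ g]
      simp [ih (h + 1) (by omega) (by omega)]
  set M := Finset.univ.sup' Finset.univ_nonempty fun s' : S => ρ m s' with hM
  have hMnn : 0 ≤ M := by
    have := Finset.le_sup' (fun s' : S => ρ m s') (Finset.mem_univ g)
    rw [hρg (H - m) m (by omega) hm1] at this
    exact this
  -- main downward induction
  have main : ∀ d h, h + d = m → 1 ≤ h → ∀ s : S, ρ h s ≤ φ h s * M := by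
    intro d
    induction d with
    | zero =>
      intro h hh _ s
      rw [Nat.add_zero] at hh; rw [hh]
      by_cases hs : s = g
      · subst hs
        rw [hρg (H - m) m (by omega) hm1, hφm]
        simp
      · rw [hφm]; simp [hs]
        rw [hM]
        exact Finset.le_sup' (fun s' : S => ρ m s') (Finset.mem_univ s)
    | succ d ih =>
      intro h hh h1 s
      have hm' : h < m := by omega
      have hH' : h < H := by omega
      rw [hρ h h1 hH' s, hφ h h1 hm' s]
      rw [Finset.sum_mul]
      apply Finset.sum_le_sum
      intro s' _
      rw [mul_assoc]
      exact mul_le_mul_of_nonneg_left (ih (h + 1) (by omega) (by omega) s')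
        (hPnn h h1 hH' s s')
  intro s
  exact main (m - 1) 1 (by omega) le_rfl s
end

section
/- Let S be a finite nonempty set, D ≥ 1 an integer, H an integer with H ≥ 2D, g ∈ S, and for each h ∈ {1,...,H−1} let P_h : S × S → ℝ be a transition matrix, i.e., P_h(s,s') ≥ 0 for all s,s' and ∑_{s'∈S} P_h(s,s') = 1 for all s; assume g is absorbing, i.e., P_h(g,g) = 1 for all h. Define the failure probabilities backward by ρ_H(s) = 1 if s ≠ g and ρ_H(g) = 0, and ρ_h(s) = ∑_{s'∈S} P_h(s,s')·ρ_{h+1}(s') for 1 ≤ h ≤ H−1, and define the values backward by V_H(s) = 1 if s ≠ g, V_H(g) = 0, and V_h(s) = 1[s ≠ g] + ∑_{s'∈S} P_h(s,s')·V_{h+1}(s') for 1 ≤ h ≤ H−1. Assume that V_h(s) ≤ D for every h ∈ {1,...,H} and s ∈ S. Then for every s ∈ S, ρ_1(s) ≤ 2^{−⌊H/(2D)⌋} ≤ exp( −log(2)·H/(4D) ). -/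
section AuxIterF

variable {S : Type*} [Fintype S] [DecidableEq S]

/-- Backward iteration: value at time `h` of the linear backward recursion with
terminal function `f` at time `h + k`. -/
def iterF (P : ℕ → S → S → ℝ) (f : S → ℝ) : ℕ → ℕ → S → ℝ
  | _, 0 => f
  | h, (k+1) => fun s => ∑ s' : S, P h s s' * iterF P f (h+1) k s'

lemma iterF_mono (P : ℕ → S → S → ℝ) (f f' : S → ℝ) :
    ∀ k h, (∀ h', h ≤ h' → h' < h + k → ∀ s s' : S, 0 ≤ P h' s s') →
      (∀ s, f s ≤ f' s) → ∀ s, iterF P f h k s ≤ iterF P f' h k s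
  | 0, h, _, hf, s => hf s
  | (k+1), h, hP, hf, s => by
      simp only [iterF]
      apply Finset.sum_le_sum
      intro s' _
      exact mul_le_mul_of_nonneg_left
        (iterF_mono P f f' k (h+1) (fun h' a b => hP h' (by omega) (by omega)) hf s')
        (hP h le_rfl (by omega) s s')

lemma iterF_smul (P : ℕ → S → S → ℝ) (f : S → ℝ) (c : ℝ) :
    ∀ k h s, iterF P (fun s => c * f s) h k s = c * iterF P f h k s
  | 0, _, _ => rfl
  | (k+1), h, s => by
      simp only [iterF]
      rw [Finset.mul_sum]
      refine Finset.sum_congr rfl fun s' _ => ?_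
      rw [iterF_smul P f c k (h+1) s']
      ring

lemma iterF_nonneg (P : ℕ → S → S → ℝ) (f : S → ℝ) :
    ∀ k h, (∀ h', h ≤ h' → h' < h + k → ∀ s s' : S, 0 ≤ P h' s s') →
      (∀ s, 0 ≤ f s) → ∀ s, 0 ≤ iterF P f h k s
  | 0, _, _, hf, s => hf s
  | (k+1), h, hP, hf, s => by
      simp only [iterF]
      refine Finset.sum_nonneg fun s' _ => mul_nonneg (hP h le_rfl (by omega) s s')
        (iterF_nonneg P f k (h+1) (fun h' a b => hP h' (by omega) (by omega)) hf s')

lemma iterF_one (P : ℕ → S → S → ℝ) :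
    ∀ k h, (∀ h', h ≤ h' → h' < h + k → ∀ s : S, ∑ s' : S, P h' s s' = 1) →
      ∀ s, iterF P (fun _ => (1:ℝ)) h k s = 1
  | 0, _, _, _ => rfl
  | (k+1), h, hrow, s => by
      simp only [iterF]
      have h1 : ∀ s' ∈ Finset.univ,
          P h s s' * iterF P (fun _ => (1:ℝ)) (h+1) k s' = P h s s' := by
        intro s' _
        rw [iterF_one P k (h+1) (fun h' a b => hrow h' (by omega) (by omega))]
        ring
      rw [Finset.sum_congr rfl h1, hrow h le_rfl (by omega) s]

lemma iterF_absorb (P : ℕ → S → S → ℝ) (g : S) (f : S → ℝ) :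
    ∀ k h, (∀ h', h ≤ h' → h' < h + k → ∀ s s' : S, 0 ≤ P h' s s') →
      (∀ h', h ≤ h' → h' < h + k → ∀ s : S, ∑ s' : S, P h' s s' = 1) →
      (∀ h', h ≤ h' → h' < h + k → P h' g g = 1) →
      iterF P f h k g = f g
  | 0, _, _, _, _ => rfl
  | (k+1), h, hP, hrow, habs => by
      simp only [iterF]
      have hzero : ∀ s' : S, s' ≠ g → P h g s' = 0 := by
        intro s' hs'
        have hsum : ∑ x ∈ (Finset.univ : Finset S).erase g, P h g x = 0 := by
          have h1 := hrow h le_rfl (by omega) g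
          have h2 : P h g g + ∑ x ∈ (Finset.univ : Finset S).erase g, P h g x
              = ∑ x : S, P h g x :=
            Finset.add_sum_erase (Finset.univ : Finset S) (fun x => P h g x)
              (Finset.mem_univ g)
          have h3 := habs h le_rfl (by omega)
          linarith
        have := (Finset.sum_eq_zero_iff_of_nonneg
          (fun x _ => hP h le_rfl (by omega) g x)).mp hsum
        exact this s' (Finset.mem_erase.mpr ⟨hs', Finset.mem_univ s'⟩)
      rw [Finset.sum_eq_single g]
      · rw [habs h le_rfl (by omega), one_mul]
        exact iterF_absorb P g f k (h+1)
          (fun h' a b => hP h' (by omega) (by omega))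
          (fun h' a b => hrow h' (by omega) (by omega))
          (fun h' a b => habs h' (by omega) (by omega))
      · intro s' _ hs'
        rw [hzero s' hs', zero_mul]
      · intro hg; exact absurd (Finset.mem_univ g) hg

end AuxIterF

/-- Finite-horizon formulation of Lemma 9 (`lem:control_terminal_prob`): if the
expected cumulative unit cost `V h s` is uniformly bounded by `D` and the horizon
satisfies `H ≥ 2D`, then the probability `ρ 1 s` of not reaching the absorbing
goal `g` by step `H` satisfies `ρ 1 s ≤ 2^{-⌊H/(2D)⌋} ≤ exp(-log 2 · H/(4D))`. -/
theorem failure_prob_exponential_decay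
    {S : Type*} [Fintype S] [DecidableEq S] [Nonempty S]
    (D : ℕ) (hD : 1 ≤ D) (H : ℕ) (hH : 2 * D ≤ H) (g : S) (P : ℕ → S → S → ℝ)
    (hPnn : ∀ h, 1 ≤ h → h < H → ∀ s s' : S, 0 ≤ P h s s')
    (hProw : ∀ h, 1 ≤ h → h < H → ∀ s : S, ∑ s' : S, P h s s' = 1)
    (habs : ∀ h, 1 ≤ h → h < H → P h g g = 1)
    (ρ V : ℕ → S → ℝ)
    (hρH : ∀ s : S, ρ H s = if s = g then 0 else 1)
    (hρ : ∀ h, 1 ≤ h → h < H → ∀ s : S, ρ h s = ∑ s' : S, P h s s' * ρ (h + 1) s')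
    (hVH : ∀ s : S, V H s = if s = g then 0 else 1)
    (hV : ∀ h, 1 ≤ h → h < H → ∀ s : S,
      V h s = (if s = g then 0 else 1) + ∑ s' : S, P h s s' * V (h + 1) s')
    (hVbound : ∀ h, 1 ≤ h → h ≤ H → ∀ s : S, V h s ≤ (D : ℝ)) :
    ∀ s : S,
      ρ 1 s ≤ ((1 : ℝ) / 2) ^ (H / (2 * D)) ∧
      ((1 : ℝ) / 2) ^ (H / (2 * D))
        ≤ Real.exp (-(Real.log 2 * (H : ℝ) / (4 * (D : ℝ)))) := by
  set ind : S → ℝ := fun s => if s = g then 0 else 1 with hind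
  have hindnn : ∀ s, 0 ≤ ind s := by intro s; simp only [hind]; split <;> norm_num
  have hindle1 : ∀ s, ind s ≤ 1 := by intro s; simp only [hind]; split <;> norm_num
  -- V is nonnegative
  have Vnn : ∀ n h, H ≤ h + n → 1 ≤ h → h ≤ H → ∀ s, 0 ≤ V h s := by
    intro n
    induction n with
    | zero =>
      intro h hn h1 hle s
      have : h = H := by omega
      subst this
      rw [hVH]; split <;> norm_num
    | succ n ih =>
      intro h hn h1 hle s
      rcases eq_or_lt_of_le hle with heq | hlt
      · subst heq; rw [hVH]; split <;> norm_num
      · rw [hV h h1 hlt s]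
        have h2 : 0 ≤ ∑ s' : S, P h s s' * V (h+1) s' :=
          Finset.sum_nonneg fun s' _ => mul_nonneg (hPnn h h1 hlt s s')
            (ih (h+1) (by omega) (by omega) (by omega) s')
        have h3 : (0:ℝ) ≤ if s = g then 0 else 1 := by split <;> norm_num
        linarith
  have VnnH : ∀ h, 1 ≤ h → h ≤ H → ∀ s, 0 ≤ V h s := fun h h1 hle s =>
    Vnn H h (by omega) h1 hle s
  -- iterF of ind is ≤ ind pointwise
  have qle : ∀ k h, 1 ≤ h → h + k ≤ H → ∀ s, iterF P ind h k s ≤ ind s := by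
    intro k h h1 hk s
    by_cases hs : s = g
    · rw [hs]
      have := iterF_absorb P g ind k h
        (fun h' a b => hPnn h' (by omega) (by omega))
        (fun h' a b => hProw h' (by omega) (by omega))
        (fun h' a b => habs h' (by omega) (by omega))
      rw [this]
    · have h2 : iterF P ind h k s ≤ iterF P (fun _ => (1:ℝ)) h k s :=
        iterF_mono P ind (fun _ => 1) k h
          (fun h' a b => hPnn h' (by omega) (by omega)) hindle1 s
      have h3 := iterF_one P k h (fun h' a b => hProw h' (by omega) (by omega)) s
      simp only [hind, if_neg hs]
      linarith
  have qnn : ∀ k h, 1 ≤ h → h + k ≤ H → ∀ s, 0 ≤ iterF P ind h k s := by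
    intro k h h1 hk s
    exact iterF_nonneg P ind k h (fun h' a b => hPnn h' (by omega) (by omega)) hindnn s
  -- key counting bound: (k+1) * q ≤ V
  have hA : ∀ k h, 1 ≤ h → h + k ≤ H → ∀ s,
      ((k:ℝ) + 1) * iterF P ind h k s ≤ V h s := by
    intro k
    induction k with
    | zero =>
      intro h h1 hk s
      simp only [Nat.cast_zero, zero_add, one_mul]
      rcases eq_or_lt_of_le (show h ≤ H by omega) with heq | hlt
      · subst heq
        rw [hVH]
        exact le_of_eq rfl
      · rw [hV h h1 hlt s]
        have h2 : 0 ≤ ∑ s' : S, P h s s' * V (h+1) s' :=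
          Finset.sum_nonneg fun s' _ => mul_nonneg (hPnn h h1 hlt s s')
            (VnnH (h+1) (by omega) (by omega) s')
        have : iterF P ind h 0 s = ind s := rfl
        rw [this]
        simp only [hind]
        linarith
    | succ k ih =>
      intro h h1 hk s
      have hlt : h < H := by omega
      have hq : iterF P ind h (k+1) s = ∑ s' : S, P h s s' * iterF P ind (h+1) k s' := rfl
      have hsum : ∑ s' : S, P h s s' * (((k:ℝ)+1) * iterF P ind (h+1) k s')
          ≤ ∑ s' : S, P h s s' * V (h+1) s' :=
        Finset.sum_le_sum fun s' _ => mul_le_mul_of_nonneg_left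
          (ih (h+1) (by omega) (by omega) s') (hPnn h h1 hlt s s')
      have hsum2 : ∑ s' : S, P h s s' * (((k:ℝ)+1) * iterF P ind (h+1) k s')
          = ((k:ℝ)+1) * iterF P ind h (k+1) s := by
        rw [hq, Finset.mul_sum]
        refine Finset.sum_congr rfl fun s' _ => by ring
      have hqle : iterF P ind h (k+1) s ≤ ind s := qle (k+1) h h1 hk s
      rw [hV h h1 hlt s]
      push_cast
      have : ((k:ℝ) + 1 + 1) * iterF P ind h (k+1) s
          = iterF P ind h (k+1) s + ((k:ℝ)+1) * iterF P ind h (k+1) s := by ring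
      rw [this]
      simp only [hind] at hqle ⊢
      linarith [hsum2 ▸ hsum]
  -- ρ is the backward iteration of its future values
  have hρeq : ∀ k h, 1 ≤ h → h + k ≤ H → ∀ s, ρ h s = iterF P (ρ (h+k)) h k s := by
    intro k
    induction k with
    | zero => intro h _ _ s; rfl
    | succ k ih =>
      intro h h1 hk s
      have hlt : h < H := by omega
      rw [hρ h h1 hlt s]
      have : iterF P (ρ (h+(k+1))) h (k+1) s
          = ∑ s' : S, P h s s' * iterF P (ρ (h+(k+1))) (h+1) k s' := rfl
      rw [this]
      refine Finset.sum_congr rfl fun s' _ => ?_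
      have h2 : h + (k+1) = (h+1) + k := by omega
      rw [h2]
      rw [ih (h+1) (by omega) (by omega) s']
  have hρHind : ρ H = ind := funext fun s => hρH s
  have hρq : ∀ h, 1 ≤ h → h ≤ H → ∀ s, ρ h s = iterF P ind h (H - h) s := by
    intro h h1 hle s
    have := hρeq (H - h) h h1 (by omega) s
    rw [this]
    have h2 : h + (H - h) = H := by omega
    rw [h2, hρHind]
  -- main block induction
  have hB : ∀ j h, 1 ≤ h → h + (2*D - 1) * j ≤ H → ∀ s, ρ h s ≤ ((1:ℝ)/2) ^ j := by
    intro j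
    induction j with
    | zero =>
      intro h h1 hk s
      simp only [pow_zero]
      rw [hρq h h1 (by omega) s]
      calc iterF P ind h (H - h) s ≤ ind s := qle (H - h) h h1 (by omega) s
        _ ≤ 1 := hindle1 s
    | succ j ih =>
      intro h h1 hk s
      have hms : (2*D - 1) * (j+1) = (2*D-1)*j + (2*D-1) := by ring
      set m := h + (2*D - 1) with hm
      have hmH : m ≤ H := by omega
      have hm1 : 1 ≤ m := by omega
      -- ρ m ≤ (1/2)^j * ind pointwise
      have hρm : ∀ s', ρ m s' ≤ ((1:ℝ)/2)^j * ind s' := by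
        intro s'
        by_cases hs' : s' = g
        · rw [hs']
          rw [hρq m hm1 hmH g]
          rw [iterF_absorb P g ind (H - m) m
            (fun h' a b => hPnn h' (by omega) (by omega))
            (fun h' a b => hProw h' (by omega) (by omega))
            (fun h' a b => habs h' (by omega) (by omega))]
          simp [hind]
        · have := ih m hm1 (by omega) s'
          simp only [hind, if_neg hs', mul_one]
          exact this
      have step1 : ρ h s = iterF P (ρ m) h (2*D - 1) s :=
        hρeq (2*D-1) h h1 (by omega) s
      have step2 : iterF P (ρ m) h (2*D-1) s
          ≤ iterF P (fun s' => ((1:ℝ)/2)^j * ind s') h (2*D-1) s :=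
        iterF_mono P (ρ m) (fun s' => ((1:ℝ)/2)^j * ind s') (2*D-1) h
          (fun h' a b => hPnn h' (by omega) (by omega)) hρm s
      have step3 : iterF P (fun s' => ((1:ℝ)/2)^j * ind s') h (2*D-1) s
          = ((1:ℝ)/2)^j * iterF P ind h (2*D-1) s :=
        iterF_smul P ind (((1:ℝ)/2)^j) (2*D-1) h s
      -- q ≤ 1/2
      have hAD := hA (2*D-1) h h1 (by omega) s
      have hcast : ((2*D-1 : ℕ):ℝ) + 1 = 2*(D:ℝ) := by
        have : (2*D-1 : ℕ) + 1 = 2*D := by omega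
        have := congrArg (fun n : ℕ => (n:ℝ)) this
        push_cast at this
        linarith
      rw [hcast] at hAD
      have hVb := hVbound h h1 (by omega) s
      have hDpos : (0:ℝ) < (D:ℝ) := by exact_mod_cast hD
      have hqhalf : iterF P ind h (2*D-1) s ≤ 1/2 := by
        nlinarith
      have hnn : (0:ℝ) ≤ ((1:ℝ)/2)^j := by positivity
      calc ρ h s = iterF P (ρ m) h (2*D-1) s := step1
        _ ≤ ((1:ℝ)/2)^j * iterF P ind h (2*D-1) s := by rw [← step3]; exact step2
        _ ≤ ((1:ℝ)/2)^j * (1/2) := mul_le_mul_of_nonneg_left hqhalf hnn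
        _ = ((1:ℝ)/2)^(j+1) := by ring
  -- assemble
  intro s
  set K := H / (2*D) with hK
  have hDpos : 0 < 2*D := by omega
  have hK1 : 1 ≤ K := by
    rw [hK]
    exact (Nat.one_le_div_iff hDpos).mpr hH
  have hKmul : 2*D*K ≤ H := by
    rw [hK, mul_comm]
    exact Nat.div_mul_le_self H (2*D)
  have hmod : H = 2*D*K + H % (2*D) := by
    rw [hK]; exact (Nat.div_add_mod H (2*D)).symm
  have hmodlt : H % (2*D) < 2*D := Nat.mod_lt _ hDpos
  constructor
  · apply hB K 1 le_rfl
    have hmul : (2*D-1)*K + K = 2*D*K := by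
      have h21 : 2*D-1+1 = 2*D := by omega
      calc (2*D-1)*K + K = (2*D-1+1)*K := by ring
        _ = 2*D*K := by rw [h21]
    omega
  · have hHle : (H:ℝ) ≤ 4*(D:ℝ)*(K:ℝ) := by
      have h2 : 2*D ≤ 2*D*K := Nat.le_mul_of_pos_right _ (by omega)
      have h3 : H ≤ 4*D*K := by
        have : 2*D*K + 2*D*K = 4*D*K := by ring
        omega
      exact_mod_cast h3
    have hlog : (0:ℝ) < Real.log 2 := Real.log_pos (by norm_num)
    have hDpos' : (0:ℝ) < (D:ℝ) := by exact_mod_cast hD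
    have hhalf : ((1:ℝ)/2)^K = Real.exp (-((K:ℝ) * Real.log 2)) := by
      rw [← Real.exp_log (show (0:ℝ) < ((1:ℝ)/2)^K by positivity)]
      congr 1
      rw [Real.log_pow]
      rw [one_div, Real.log_inv]
      push_cast
      ring
    rw [hhalf]
    apply Real.exp_le_exp.mpr
    rw [neg_le_neg_iff]
    rw [div_le_iff₀ (by positivity : (0:ℝ) < 4*(D:ℝ))]
    calc Real.log 2 * (H:ℝ) ≤ Real.log 2 * (4*(D:ℝ)*(K:ℝ)) :=
          mul_le_mul_of_nonneg_left hHle (le_of_lt hlog)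
      _ = (K:ℝ) * Real.log 2 * (4*(D:ℝ)) := by ring
end
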